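/- Fix integers p, q ≥ 1 and a constant C > 0, and work in ℝ^p × ℝ^q with the Euclidean norm ‖(x₁,x₂)‖² = ‖x₁‖² + ‖x₂‖². For a unit vector u ∈ ℝ^q, define N_u = {(x₁, z·u) : x₁ ∈ ℝ^p, z ≥ 0, ‖x₁‖² + (C − z)² = C²}. Let ξ = (ξ₁, ξ₂) ∈ ℝ^p × ℝ^q with ξ₂ ≠ 0, and set ũ = −ξ₂/‖ξ₂‖. Then for every unit vector u ∈ ℝ^q, the Euclidean infimum distance from ξ to N_u is at most the infimum distance from ξ to N_ũ; that is, the maximum over unit vectors u of dist(ξ, N_u) is attained at ũ = −ξ₂/‖ξ₂‖. -/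

import Mathlib

open Metric

/-- The bounding sphere `N_u = {(x₁, z·u) : z ≥ 0, ‖x₁‖² + (C − z)² = C²}` inside
`ℝ^p × ℝ^q` equipped with the Euclidean (L²) product norm. -/
def Nsphere (p q : ℕ) (C : ℝ) (u : EuclideanSpace ℝ (Fin q)) :
    Set (WithLp 2 (EuclideanSpace ℝ (Fin p) × EuclideanSpace ℝ (Fin q))) :=
  {w | ∃ (x₁ : EuclideanSpace ℝ (Fin p)) (z : ℝ), 0 ≤ z ∧
    ‖x₁‖ ^ 2 + (C - z) ^ 2 = C ^ 2 ∧
    w = (WithLp.equiv 2 (EuclideanSpace ℝ (Fin p) × EuclideanSpace ℝ (Fin q))).symm (x₁, z • u)}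

/-- Among the bounding spheres `N_u` (over unit vectors `u ∈ ℝ^q`), the distance from
`ξ = (ξ₁, ξ₂)` with `ξ₂ ≠ 0` is maximized at `ũ = −ξ₂/‖ξ₂‖`. -/
theorem stmt_13 (p q : ℕ) (hp : 1 ≤ p) (hq : 1 ≤ q) (C : ℝ) (hC : 0 < C)
    (ξ₁ : EuclideanSpace ℝ (Fin p)) (ξ₂ : EuclideanSpace ℝ (Fin q)) (hξ₂ : ξ₂ ≠ 0)
    (u : EuclideanSpace ℝ (Fin q)) (hu : ‖u‖ = 1) :
    Metric.infDist
        ((WithLp.equiv 2 (EuclideanSpace ℝ (Fin p) × EuclideanSpace ℝ (Fin q))).symm (ξ₁, ξ₂))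
        (Nsphere p q C u) ≤
      Metric.infDist
        ((WithLp.equiv 2 (EuclideanSpace ℝ (Fin p) × EuclideanSpace ℝ (Fin q))).symm (ξ₁, ξ₂))
        (Nsphere p q C (-(‖ξ₂‖⁻¹ • ξ₂))) := by
  set ξ := (WithLp.equiv 2 (EuclideanSpace ℝ (Fin p) × EuclideanSpace ℝ (Fin q))).symm (ξ₁, ξ₂)
  set v : EuclideanSpace ℝ (Fin q) := -(‖ξ₂‖⁻¹ • ξ₂) with hv
  have hnorm : ‖ξ₂‖ ≠ 0 := norm_ne_zero_iff.mpr hξ₂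
  -- key pointwise inequality on the second coordinates
  have key : ∀ z : ℝ, 0 ≤ z → ‖ξ₂ - z • u‖ ≤ ‖ξ₂ - z • v‖ := by
    intro z hz
    have h1 : ‖z • u‖ = z := by
      rw [norm_smul, hu, mul_one, Real.norm_of_nonneg hz]
    have hvnorm : ‖v‖ = 1 := by
      rw [hv, norm_neg, norm_smul, norm_inv, norm_norm, inv_mul_cancel₀ hnorm]
    have h2 : ‖z • v‖ = z := by
      rw [norm_smul, hvnorm, mul_one, Real.norm_of_nonneg hz]
    have hiu : -(z * ‖ξ₂‖) ≤ inner ℝ ξ₂ (z • u) := by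
      have := abs_real_inner_le_norm ξ₂ (z • u)
      rw [h1] at this
      have := neg_abs_le (inner ℝ ξ₂ (z • u) : ℝ)
      nlinarith [abs_real_inner_le_norm ξ₂ (z • u), neg_abs_le (inner ℝ ξ₂ (z • u) : ℝ)]
    have hiv : (inner ℝ ξ₂ (z • v) : ℝ) = -(z * ‖ξ₂‖) := by
      rw [hv, real_inner_smul_right, inner_neg_right, real_inner_smul_right,
        real_inner_self_eq_norm_sq]
      field_simp
    have e1 : ‖ξ₂ - z • u‖ ^ 2 = ‖ξ₂‖ ^ 2 - 2 * inner ℝ ξ₂ (z • u) + z ^ 2 := by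
      rw [norm_sub_sq_real, h1]
    have e2 : ‖ξ₂ - z • v‖ ^ 2 = ‖ξ₂‖ ^ 2 - 2 * inner ℝ ξ₂ (z • v) + z ^ 2 := by
      rw [norm_sub_sq_real, h2]
    have hsq : ‖ξ₂ - z • u‖ ^ 2 ≤ ‖ξ₂ - z • v‖ ^ 2 := by
      rw [e1, e2, hiv]; linarith
    nlinarith [norm_nonneg (ξ₂ - z • u), norm_nonneg (ξ₂ - z • v), hsq]
  -- N_v is nonempty
  have hne : (Nsphere p q C v).Nonempty := by
    refine ⟨_, 0, 0, le_refl 0, by simp, rfl⟩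
  have : Nonempty (Nsphere p q C v) := hne.to_subtype
  rw [Metric.infDist_eq_iInf (s := Nsphere p q C v)]
  apply le_ciInf
  rintro ⟨w, x₁, z, hz, hsph, rfl⟩
  refine le_trans (Metric.infDist_le_dist_of_mem
    (⟨x₁, z, hz, hsph, rfl⟩ : _ ∈ Nsphere p q C u)) ?_
  rw [WithLp.prod_dist_eq_of_L2 ξ ((WithLp.equiv 2 _).symm (x₁, z • u)),
    WithLp.prod_dist_eq_of_L2 ξ ((WithLp.equiv 2 _).symm (x₁, z • v))]
  apply Real.sqrt_le_sqrt
  gcongr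
  · exact le_refl (dist ξ₁ x₁)
  · show dist ξ₂ (z • u) ≤ dist ξ₂ (z • v)
    simpa [dist_eq_norm] using key z hz
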